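/- For any two full-support probability distributions μ ≠ π on 𝒴, the value of the optimization problem min_{(q_1,q_2)} ( D(q_1‖μ) + D(q_2‖π) ), where the minimum is over pairs of probability distributions q_1, q_2 on 𝒴 satisfying D(q_1‖μ) ≥ D(q_2‖μ), is equal to 2·B(μ, π). (This is the key step showing that when only the outlier distribution μ is known, the test declaring as outlier the coordinate whose empirical distribution is closest to μ in relative entropy achieves the optimal error exponent 2·B(μ, π).) -/
import Mathlib


open Filter Finset Topology

noncomputable section

/-- `p` is a probability distribution on the finite alphabet. -/
def IsProb {𝓨 : Type} [Fintype 𝓨] (p : 𝓨 → ℝ) : Prop :=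
  (∀ y, 0 ≤ p y) ∧ ∑ y, p y = 1

/-- `p` has full support. -/
def FullSupport {𝓨 : Type} (p : 𝓨 → ℝ) : Prop := ∀ y, 0 < p y

/-- Relative entropy `D(q‖p)` (natural log, convention `0·log 0 = 0`,
which holds since `Real.log 0 = 0` in Mathlib). -/
def KL {𝓨 : Type} [Fintype 𝓨] (q p : 𝓨 → ℝ) : ℝ :=
  ∑ y, q y * Real.log (q y / p y)

/-- Bhattacharyya distance `B(p,q) = -log ∑ √(p y) √(q y)`. -/
def Bhat {𝓨 : Type} [Fintype 𝓨] (p q : 𝓨 → ℝ) : ℝ :=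
  - Real.log (∑ y, Real.sqrt (p y) * Real.sqrt (q y))

/-- Gibbs' inequality: nonnegativity of relative entropy. -/
lemma kl_nonneg' {𝓨 : Type} [Fintype 𝓨] (q p : 𝓨 → ℝ)
    (hq0 : ∀ y, 0 ≤ q y) (hq1 : ∑ y, q y = 1)
    (hp : ∀ y, 0 < p y) (hp1 : ∑ y, p y = 1) :
    0 ≤ KL q p := by
  have h : ∀ y ∈ Finset.univ, q y - p y ≤ q y * Real.log (q y / p y) := by
    intro y _
    rcases eq_or_lt_of_le (hq0 y) with h0 | h0
    · simp [← h0]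
      linarith [(hp y).le]
    · have hpy := hp y
      have hlog : Real.log (p y / q y) ≤ p y / q y - 1 :=
        Real.log_le_sub_one_of_pos (by positivity)
      have hlog2 : Real.log (q y / p y) = - Real.log (p y / q y) := by
        rw [← Real.log_inv]; congr 1; field_simp
      rw [hlog2]
      have h2 := mul_le_mul_of_nonneg_left hlog (le_of_lt h0)
      have hq' : q y * (p y / q y - 1) = p y - q y := by field_simp
      nlinarith
  have := Finset.sum_le_sum h
  rw [Finset.sum_sub_distrib, hq1, hp1] at this
  simpa [KL] using this

theorem statement7 (𝓨 : Type) [Fintype 𝓨] [Nonempty 𝓨]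
    (μ π : 𝓨 → ℝ) (hμ : IsProb μ) (hπ : IsProb π)
    (hμf : FullSupport μ) (hπf : FullSupport π) (hne : μ ≠ π) :
    IsLeast {x : ℝ | ∃ q₁ q₂ : 𝓨 → ℝ, IsProb q₁ ∧ IsProb q₂ ∧
        KL q₁ μ ≥ KL q₂ μ ∧
        x = KL q₁ μ + KL q₂ π}
      (2 * Bhat μ π) := by
  set Z : ℝ := ∑ y, Real.sqrt (μ y) * Real.sqrt (π y) with hZdef
  have hZ : 0 < Z :=
    Finset.sum_pos (fun y _ => by
      have := hμf y; have := hπf y; positivity) Finset.univ_nonempty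
  set qs : 𝓨 → ℝ := fun y => Real.sqrt (μ y) * Real.sqrt (π y) / Z with hqsdef
  have hqspos : ∀ y, 0 < qs y := fun y => by
    have := hμf y; have := hπf y
    simp only [hqsdef]; positivity
  have hqssum : ∑ y, qs y = 1 := by
    simp only [hqsdef]
    rw [← Finset.sum_div, ← hZdef, div_self hZ.ne']
  have hBhat : Bhat μ π = - Real.log Z := rfl
  -- key identity
  have hident : ∀ q : 𝓨 → ℝ, (∀ y, 0 ≤ q y) → (∑ y, q y = 1) →
      KL q μ + KL q π = 2 * KL q qs + 2 * Bhat μ π := by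
    intro q hq0 hq1
    have key : ∀ y, q y * Real.log (q y / μ y) + q y * Real.log (q y / π y)
        = 2 * (q y * Real.log (q y / qs y)) + q y * (-2 * Real.log Z) := by
      intro y
      rcases eq_or_lt_of_le (hq0 y) with h0 | h0
      · simp [← h0]
      · have hμy := hμf y; have hπy := hπf y
        have h1 : Real.log (q y / qs y) = Real.log (q y) - Real.log (qs y) :=
          Real.log_div h0.ne' (hqspos y).ne'
        have h2 : Real.log (qs y)
            = Real.log (μ y) / 2 + Real.log (π y) / 2 - Real.log Z := by
          simp only [hqsdef]
          rw [Real.log_div (by positivity) hZ.ne',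
            Real.log_mul (by positivity) (by positivity),
            Real.log_sqrt hμy.le, Real.log_sqrt hπy.le]
        rw [Real.log_div h0.ne' hμy.ne', Real.log_div h0.ne' hπy.ne', h1, h2]
        ring
    have hsum : ∑ y, (q y * Real.log (q y / μ y) + q y * Real.log (q y / π y))
        = ∑ y, (2 * (q y * Real.log (q y / qs y)) + q y * (-2 * Real.log Z)) :=
      Finset.sum_congr rfl (fun y _ => key y)
    have this := hsum
    rw [Finset.sum_add_distrib, Finset.sum_add_distrib, ← Finset.mul_sum,
      ← Finset.sum_mul, hq1] at this
    simp only [KL]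
    rw [hBhat]
    linarith [this]
  have hKLqs : KL qs qs = 0 := by
    simp only [KL]
    apply Finset.sum_eq_zero
    intro y _
    rw [div_self (hqspos y).ne', Real.log_one, mul_zero]
  constructor
  · refine ⟨qs, qs, ⟨fun y => (hqspos y).le, hqssum⟩,
      ⟨fun y => (hqspos y).le, hqssum⟩, le_refl _, ?_⟩
    have := hident qs (fun y => (hqspos y).le) hqssum
    linarith [this, hKLqs]
  · rintro x ⟨q₁, q₂, hq₁, hq₂, hge, rfl⟩
    have h1 : KL q₂ μ + KL q₂ π = 2 * KL q₂ qs + 2 * Bhat μ π :=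
      hident q₂ hq₂.1 hq₂.2
    have h2 : 0 ≤ KL q₂ qs := kl_nonneg' q₂ qs hq₂.1 hq₂.2 hqspos hqssum
    linarith
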